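/- Let L : [0,∞) → [0,∞) be a continuous nondecreasing function with L(0) = 0 and L(t) → ∞ as t → ∞, and define its right-continuous right-inverse τ(s) := sup{r ≥ 0 : L(r) ≤ s}. Then for every bounded measurable function f : ℝ → ℝ and all 0 ≤ a ≤ b, the Lebesgue–Stieltjes integral ∫_{(τ(a), τ(b)]} f(s) dL(s) equals ∫_a^b f(τ(s)) ds. -/

import Mathlib

open MeasureTheory Filter Set

/-- Change of variables for the Lebesgue–Stieltjes integral with respect to a
continuous nondecreasing `L` with `L 0 = 0` diverging to infinity, and its
right-continuous right-inverse `τ`. -/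
theorem stmt_0 (L : StieltjesFunction ℝ)
    (hLcont : Continuous L)
    (hL0 : L 0 = 0)
    (hLtop : Tendsto L atTop atTop)
    (τ : ℝ → ℝ)
    (hτ : ∀ s, τ s = sSup {r : ℝ | 0 ≤ r ∧ L r ≤ s})
    (f : ℝ → ℝ) (hf : Measurable f) (C : ℝ) (hfb : ∀ x, |f x| ≤ C)
    (a b : ℝ) (ha : 0 ≤ a) (hab : a ≤ b) :
    ∫ s in Set.Ioc (τ a) (τ b), f s ∂L.measure = ∫ s in a..b, f (τ s) := by
  have hmono : Monotone (L : ℝ → ℝ) := L.mono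
  have hb : (0:ℝ) ≤ b := ha.trans hab
  -- the sets defining τ are bounded above
  have hbdd : ∀ s : ℝ, BddAbove {r : ℝ | 0 ≤ r ∧ L r ≤ s} := by
    intro s
    obtain ⟨M, hM⟩ := eventually_atTop.1 (hLtop.eventually (eventually_gt_atTop s))
    exact ⟨M, fun r hr => not_lt.1 fun hMr => (hM r hMr.le).not_ge hr.2⟩
  -- for s ≥ 0, τ s belongs to the defining set (which is closed and nonempty)
  have hτmem : ∀ s : ℝ, 0 ≤ s → 0 ≤ τ s ∧ L (τ s) ≤ s := by
    intro s hs
    have hcl : IsClosed {r : ℝ | 0 ≤ r ∧ L r ≤ s} := by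
      have : {r : ℝ | 0 ≤ r ∧ L r ≤ s} = Ici 0 ∩ (L : ℝ → ℝ) ⁻¹' (Iic s) := by
        rfl
      rw [this]
      exact isClosed_Ici.inter (isClosed_Iic.preimage hLcont)
    have hne : (0:ℝ) ∈ {r : ℝ | 0 ≤ r ∧ L r ≤ s} := ⟨le_refl 0, by rw [hL0]; exact hs⟩
    have := hcl.csSup_mem ⟨0, hne⟩ (hbdd s)
    rw [← hτ s] at this
    exact this
  -- L ∘ τ = id on [0, ∞)
  have hLτ : ∀ s : ℝ, 0 ≤ s → L (τ s) = s := by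
    intro s hs
    refine le_antisymm (hτmem s hs).2 ?_
    obtain ⟨M₀, hM₀⟩ := eventually_atTop.1 (hLtop.eventually (eventually_ge_atTop s))
    have hM : s ≤ L (max M₀ 0) := hM₀ _ (le_max_left _ _)
    obtain ⟨r, hrIcc, hrL⟩ := intermediate_value_Icc (le_max_right M₀ 0)
      hLcont.continuousOn ⟨by rw [hL0]; exact hs, hM⟩
    have hrle : r ≤ τ s := by
      rw [hτ s]; exact le_csSup (hbdd s) ⟨hrIcc.1, hrL.le⟩
    calc s = L r := hrL.symm
      _ ≤ L (τ s) := hmono hrle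
  -- τ s = 0 for s < 0, and τ is nonnegative
  have hτ0 : ∀ s : ℝ, s < 0 → τ s = 0 := by
    intro s hs
    rw [hτ s]
    have : {r : ℝ | 0 ≤ r ∧ L r ≤ s} = ∅ := by
      ext r
      simp only [mem_setOf_eq, mem_empty_iff_false, iff_false, not_and, not_le]
      intro hr
      calc s < 0 := hs
        _ = L 0 := hL0.symm
        _ ≤ L r := hmono hr
    rw [this, Real.sSup_empty]
  have hτnn : ∀ s : ℝ, 0 ≤ τ s := by
    intro s
    rcases le_or_gt 0 s with h | h
    · exact (hτmem s h).1
    · rw [hτ0 s h]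
  -- τ is monotone
  have hτmono : Monotone τ := by
    intro s t hst
    rcases le_or_gt 0 s with hs | hs
    · rw [hτ s, hτ t]
      refine csSup_le_csSup (hbdd t) ⟨0, le_refl 0, by rw [hL0]; exact hs⟩ ?_
      exact fun r hr => ⟨hr.1, hr.2.trans hst⟩
    · rw [hτ0 s hs]; exact hτnn t
  -- Galois-type correspondence: for s, d ≥ 0, L s ≤ d ↔ s ≤ τ d
  have key : ∀ s d : ℝ, 0 ≤ s → 0 ≤ d → (L s ≤ d ↔ s ≤ τ d) := by
    intro s d hs hd
    constructor
    · intro h; rw [hτ d]; exact le_csSup (hbdd d) ⟨hs, h⟩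
    · intro h; exact (hmono h).trans (hLτ d hd).le
  have hLmeas : Measurable (L : ℝ → ℝ) := hLcont.measurable
  set μ := L.measure.restrict (Ioc (τ a) (τ b)) with hμdef
  -- the pushforward of μ under L is Lebesgue measure on (a, b]
  have hmap : Measure.map L μ = volume.restrict (Ioc a b) := by
    refine Measure.ext_of_Ioc' _ _ (fun c d hcd => ?_) (fun c d hcd => ?_)
    · rw [Measure.map_apply hLmeas measurableSet_Ioc, hμdef,
        Measure.restrict_apply (hLmeas measurableSet_Ioc)]
      refine ((measure_mono inter_subset_right).trans_lt ?_).ne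
      rw [L.measure_Ioc]
      exact ENNReal.ofReal_lt_top
    · rw [Measure.map_apply hLmeas measurableSet_Ioc, hμdef,
        Measure.restrict_apply (hLmeas measurableSet_Ioc),
        Measure.restrict_apply measurableSet_Ioc]
      rcases lt_or_ge d 0 with hd | hd
      · have h1 : (L : ℝ → ℝ) ⁻¹' (Ioc c d) ∩ Ioc (τ a) (τ b) = ∅ := by
          ext s
          simp only [mem_inter_iff, mem_preimage, mem_Ioc, mem_empty_iff_false, iff_false]
          rintro ⟨⟨_, hsd⟩, hsa, _⟩
          have hs0 : (0:ℝ) ≤ s := (hτnn a).trans hsa.le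
          have : (0:ℝ) ≤ L s := by rw [← hL0]; exact hmono hs0
          linarith
        have h2 : Ioc c d ∩ Ioc a b = ∅ := by
          ext s
          simp only [mem_inter_iff, mem_Ioc, mem_empty_iff_false, iff_false]
          rintro ⟨⟨_, hsd⟩, hsa, _⟩
          linarith
        simp [h1, h2]
      · rcases le_or_gt 0 c with hc | hc
        · have hset : (L : ℝ → ℝ) ⁻¹' (Ioc c d) ∩ Ioc (τ a) (τ b)
              = Ioc (max (τ c) (τ a)) (min (τ d) (τ b)) := by
            ext s
            simp only [mem_inter_iff, mem_preimage, mem_Ioc, mem_Ioc, max_lt_iff, le_min_iff]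
            constructor
            · rintro ⟨⟨hcs, hsd⟩, hsa, hsb⟩
              have hs0 : (0:ℝ) ≤ s := (hτnn a).trans hsa.le
              refine ⟨⟨?_, hsa⟩, (key s d hs0 hd).1 hsd, hsb⟩
              exact lt_of_not_ge fun h => hcs.not_ge ((key s c hs0 hc).2 h)
            · rintro ⟨⟨hcs, hsa⟩, hsd, hsb⟩
              have hs0 : (0:ℝ) ≤ s := (hτnn a).trans hsa.le
              refine ⟨⟨?_, (key s d hs0 hd).2 hsd⟩, hsa, hsb⟩
              exact lt_of_not_ge fun h => hcs.not_ge ((key s c hs0 hc).1 h)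
          rw [hset, L.measure_Ioc, hmono.map_min, hmono.map_max,
            hLτ a ha, hLτ b hb, hLτ c hc, hLτ d hd, Ioc_inter_Ioc, Real.volume_Ioc]
        · have hset : (L : ℝ → ℝ) ⁻¹' (Ioc c d) ∩ Ioc (τ a) (τ b)
              = Ioc (τ a) (min (τ d) (τ b)) := by
            ext s
            simp only [mem_inter_iff, mem_preimage, mem_Ioc, le_min_iff]
            constructor
            · rintro ⟨⟨_, hsd⟩, hsa, hsb⟩
              have hs0 : (0:ℝ) ≤ s := (hτnn a).trans hsa.le
              exact ⟨hsa, (key s d hs0 hd).1 hsd, hsb⟩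
            · rintro ⟨hsa, hsd, hsb⟩
              have hs0 : (0:ℝ) ≤ s := (hτnn a).trans hsa.le
              have : (0:ℝ) ≤ L s := by rw [← hL0]; exact hmono hs0
              exact ⟨⟨hc.trans_le this, (key s d hs0 hd).2 hsd⟩, hsa, hsb⟩
          have hmax : max c a = a := max_eq_right (hc.le.trans ha)
          rw [hset, L.measure_Ioc, hmono.map_min, hLτ a ha, hLτ b hb, hLτ d hd,
            Ioc_inter_Ioc, Real.volume_Ioc]
          norm_num [hmax]
  -- s ≤ τ (L s) for s ≥ 0
  have hτLs : ∀ s : ℝ, 0 ≤ s → s ≤ τ (L s) := by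
    intro s hs
    rw [hτ]
    exact le_csSup (hbdd _) ⟨hs, le_rfl⟩
  -- the set where τ ∘ L ≠ id on [0, ∞) is L-null
  have hnull : L.measure {s : ℝ | 0 ≤ s ∧ s < τ (L s)} = 0 := by
    have hsub : {s : ℝ | 0 ≤ s ∧ s < τ (L s)}
        ⊆ ⋃ q : ℚ, {r : ℝ | 0 ≤ r ∧ L r = L (q:ℝ) ∧ r < (q:ℝ)} := by
      rintro s ⟨hs0, hs⟩
      obtain ⟨q, hq1, hq2⟩ := exists_rat_btwn hs
      have hLs0 : (0:ℝ) ≤ L s := by rw [← hL0]; exact hmono hs0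
      refine mem_iUnion.2 ⟨q, hs0, ?_, hq1⟩
      exact le_antisymm (hmono hq1.le) ((hmono hq2.le).trans (hLτ _ hLs0).le)
    refine measure_mono_null hsub (measure_iUnion_null fun q => ?_)
    set B := {r : ℝ | 0 ≤ r ∧ L r = L (q:ℝ) ∧ r < (q:ℝ)} with hBdef
    rcases B.eq_empty_or_nonempty with h | h
    · simp [h]
    · have hBbd : BddBelow B := ⟨0, fun r hr => hr.1⟩
      set u := sInf B with hudef
      have huB : ∀ r ∈ B, u ≤ r := fun r hr => csInf_le hBbd hr
      have hLu : L u = L (q:ℝ) := by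
        have hucl : u ∈ closure B := csInf_mem_closure h hBbd
        have hBsub : B ⊆ (L : ℝ → ℝ) ⁻¹' {L (q:ℝ)} := fun r hr => hr.2.1
        have : closure B ⊆ (L : ℝ → ℝ) ⁻¹' {L (q:ℝ)} :=
          closure_minimal hBsub (isClosed_singleton.preimage hLcont)
        exact this hucl
      have hBIcc : B ⊆ Icc u (q:ℝ) := fun r hr => ⟨huB r hr, hr.2.2.le⟩
      refine measure_mono_null hBIcc ?_
      rw [L.measure_Icc]
      have hlL : Function.leftLim (L : ℝ → ℝ) u = L u := by
        exact leftLim_eq_of_tendsto ((hLcont.tendsto u).mono_left nhdsWithin_le_nhds)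
      rw [hlL, hLu, sub_self, ENNReal.ofReal_zero]
  -- f = f ∘ τ ∘ L almost everywhere for μ
  have hae : ∀ᵐ s ∂μ, f s = f (τ (L s)) := by
    rw [hμdef, ae_restrict_iff' measurableSet_Ioc, ae_iff]
    refine measure_mono_null (fun s hs => ?_) hnull
    simp only [mem_setOf_eq, not_forall] at hs
    obtain ⟨hsIoc, hne⟩ := hs
    have hs0 : (0:ℝ) ≤ s := (hτnn a).trans hsIoc.1.le
    refine ⟨hs0, lt_of_le_of_ne (hτLs s hs0) fun h => hne ?_⟩
    rw [← h]
  -- put everything together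
  have hτmeas : Measurable τ := hτmono.measurable
  have hfτmeas : Measurable (fun t => f (τ t)) := hf.comp hτmeas
  calc ∫ s in Ioc (τ a) (τ b), f s ∂L.measure
      = ∫ s in Ioc (τ a) (τ b), f (τ (L s)) ∂L.measure := integral_congr_ae hae
    _ = ∫ t, f (τ t) ∂(Measure.map L μ) :=
        (integral_map hLmeas.aemeasurable hfτmeas.aestronglyMeasurable).symm
    _ = ∫ t in Ioc a b, f (τ t) := by rw [hmap]
    _ = ∫ s in a..b, f (τ s) := (intervalIntegral.integral_of_le hab).symm
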